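/- SSA hierarchy for pure Gaussian states (Theorem 2): Let n_A, n_B, n_C be positive integers, n = n_A + n_B + n_C, and let V be a 2n×2n real symmetric positive definite symplectic matrix (V J_n Vᵀ = J_n), the covariance matrix of a pure Gaussian state, partitioned into groups A, B, C of n_A, n_B, n_C modes. Suppose there exist: a 2n_A×2n_A real symplectic matrix S_A and a real ν ≥ 1 such that V_A = S_A D_A S_Aᵀ where D_A is the diagonal matrix with mode-wise symplectic spectrum (1, …, 1, ν) (each eigenvalue appearing twice, paired per mode); a 2n_B×2n_B real symplectic matrix S_B and reals β_1, …, β_{n_B} ≥ 1 with V_B = S_B D_B S_Bᵀ, D_B diagonal with mode-wise entries (β_1, β_1, …, β_{n_B}, β_{n_B}); and similarly a real symplectic S_C and γ_1, …, γ_{n_C} ≥ 1 with V_C = S_C D_C S_Cᵀ. Then the von Neumann entropies satisfy h(ν) ≤ Σ_{j=1}^{n_B} h(β_j) + Σ_{k=1}^{n_C} h(γ_k); that is, the strong subadditivity for the log-determinant implies the strong subadditivity of the von Neumann entropy for such states. -/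

import Mathlib

open Matrix

noncomputable section

/-- The 2×2 symplectic form σ = [[0,1],[-1,0]]. -/
def symp : Matrix (Fin 2) (Fin 2) ℝ := !![0, 1; -1, 0]

/-- The symplectic form on a system whose modes are indexed by `α`:
the direct sum of one copy of `σ` per mode. -/
def Jmat (α : Type*) [DecidableEq α] : Matrix (α × Fin 2) (α × Fin 2) ℝ :=
  fun p q => if p.1 = q.1 then symp p.2 q.2 else 0

/-- The von Neumann entropy contribution of a single symplectic eigenvalue
`ν ≥ 1`: `h(ν) = ((ν+1)/2)·log((ν+1)/2) − ((ν−1)/2)·log((ν−1)/2)` (with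
`h(1) = 0`). -/
noncomputable def hEnt (ν : ℝ) : ℝ :=
  ((ν + 1) / 2) * Real.log ((ν + 1) / 2) - ((ν - 1) / 2) * Real.log ((ν - 1) / 2)

lemma hEnt_one : hEnt 1 = 0 := by simp [hEnt]
lemma hEnt_continuous : Continuous hEnt := by
  unfold hEnt
  exact (Real.continuous_mul_log.comp (by continuity)).sub
    (Real.continuous_mul_log.comp (by continuity))
lemma hasDerivAt_hEnt {x : ℝ} (hx : 1 < x) :
    HasDerivAt hEnt (Real.log ((x + 1) / (x - 1)) / 2) x := by
  have hu : (0:ℝ) < (x + 1) / 2 := by linarith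
  have hv : (0:ℝ) < (x - 1) / 2 := by linarith
  have h1 : HasDerivAt (fun t : ℝ => (t + 1) / 2) (1 / 2) x := by
    simpa using ((hasDerivAt_id x).add_const 1).div_const 2
  have h2 : HasDerivAt (fun t : ℝ => (t - 1) / 2) (1 / 2) x := by
    simpa using ((hasDerivAt_id x).sub_const 1).div_const 2
  have H := ((Real.hasDerivAt_mul_log hu.ne').comp x h1).sub
    ((Real.hasDerivAt_mul_log hv.ne').comp x h2)
  have hq : ((x + 1) / 2) / ((x - 1) / 2) = (x + 1) / (x - 1) := by field_simp
  convert H using 1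
  · rfl
  · rfl
  · rfl
  rw [← hq, Real.log_div hu.ne' hv.ne']
  ring

lemma one_lt_ratio {x : ℝ} (hx : 1 < x) : 1 < (x + 1) / (x - 1) := by
  rw [lt_div_iff₀ (by linarith)]; linarith

lemma hEnt_monotoneOn : MonotoneOn hEnt (Set.Ici 1) := by
  apply monotoneOn_of_deriv_nonneg (convex_Ici 1) hEnt_continuous.continuousOn
  · intro x hx
    rw [interior_Ici] at hx
    exact (hasDerivAt_hEnt hx).differentiableAt.differentiableWithinAt
  · intro x hx
    rw [interior_Ici] at hx
    rw [(hasDerivAt_hEnt hx).deriv]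
    have := Real.log_nonneg (one_lt_ratio hx).le
    positivity

lemma hEnt_nonneg {x : ℝ} (hx : 1 ≤ x) : 0 ≤ hEnt x := by
  have := hEnt_monotoneOn (Set.self_mem_Ici) hx hx
  rwa [hEnt_one] at this

noncomputable def phiF (x : ℝ) : ℝ := x * (Real.log (x + 1) - Real.log (x - 1))

lemma hasDerivAt_phiF {x : ℝ} (hx : 1 < x) :
    HasDerivAt phiF
      ((Real.log (x + 1) - Real.log (x - 1)) + x * (1 / (x + 1) - 1 / (x - 1))) x := by
  have ha : HasDerivAt (fun t : ℝ => Real.log (t + 1)) (1 / (x + 1)) x := by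
    simpa [Function.comp_def] using (Real.hasDerivAt_log (by linarith : x + 1 ≠ 0)).comp x
      ((hasDerivAt_id x).add_const 1)
  have hb : HasDerivAt (fun t : ℝ => Real.log (t - 1)) (1 / (x - 1)) x := by
    simpa [Function.comp_def] using (Real.hasDerivAt_log (by intro h; nlinarith : x - 1 ≠ 0)).comp x
      ((hasDerivAt_id x).sub_const 1)
  have := (hasDerivAt_id x).mul (ha.sub hb)
  convert this using 1
  · rfl
  · rfl
  · rfl
  simp only [id_eq, Pi.sub_apply]
  ring

lemma phiF_antitoneOn : AntitoneOn phiF (Set.Ioi 1) := by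
  apply antitoneOn_of_deriv_nonpos (convex_Ioi 1)
  · intro x hx
    have hx' : (1:ℝ) < x := hx
    exact (hasDerivAt_phiF hx').continuousAt.continuousWithinAt
  · intro x hx
    rw [interior_Ioi] at hx
    exact (hasDerivAt_phiF hx).differentiableAt.differentiableWithinAt
  · intro x hx
    rw [interior_Ioi, Set.mem_Ioi] at hx
    rw [(hasDerivAt_phiF hx).deriv]
    have h1 : (0:ℝ) < x - 1 := by linarith
    have h2 : (0:ℝ) < x + 1 := by linarith
    have hu : 1 < (x + 1) / (x - 1) := one_lt_ratio hx
    have hlu : 0 < Real.log ((x + 1) / (x - 1)) := Real.log_pos hu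
    have hs := Real.self_lt_sinh_iff.mpr hlu
    rw [Real.sinh_log (by positivity)] at hs
    rw [Real.log_div h2.ne' h1.ne'] at hs
    have harith : ((x + 1) / (x - 1) - ((x + 1) / (x - 1))⁻¹) / 2
        = - (x * (1 / (x + 1) - 1 / (x - 1))) := by
      field_simp
      ring
    rw [harith] at hs
    linarith

lemma hEnt_mul_le {x y : ℝ} (hx : 1 ≤ x) (hy : 1 ≤ y) :
    hEnt (x * y) ≤ hEnt x + hEnt y := by
  set F : ℝ → ℝ := fun t => hEnt t + hEnt y - hEnt (t * y) with hF
  have hF1 : F 1 = 0 := by simp [hF, hEnt_one]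
  have hmono : MonotoneOn F (Set.Ici 1) := by
    apply monotoneOn_of_deriv_nonneg (convex_Ici 1)
    · exact ((hEnt_continuous.add continuous_const).sub
        (hEnt_continuous.comp (continuous_id.mul continuous_const))).continuousOn
    · intro t ht
      rw [interior_Ici, Set.mem_Ioi] at ht
      have hty : 1 < t * y := lt_of_lt_of_le ht (le_mul_of_one_le_right (by linarith) hy)
      have hd : HasDerivAt F (Real.log ((t + 1) / (t - 1)) / 2
          - Real.log ((t * y + 1) / (t * y - 1)) / 2 * y) t :=
        ((hasDerivAt_hEnt ht).add_const (hEnt y)).sub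
          ((hasDerivAt_hEnt hty).comp (h₂ := hEnt) t (hasDerivAt_mul_const y))
      exact hd.differentiableAt.differentiableWithinAt
    · intro t ht
      rw [interior_Ici, Set.mem_Ioi] at ht
      have hty : 1 < t * y := lt_of_lt_of_le ht (le_mul_of_one_le_right (by linarith) hy)
      have hd : HasDerivAt F (Real.log ((t + 1) / (t - 1)) / 2
          - Real.log ((t * y + 1) / (t * y - 1)) / 2 * y) t :=
        ((hasDerivAt_hEnt ht).add_const (hEnt y)).sub
          ((hasDerivAt_hEnt hty).comp (h₂ := hEnt) t (hasDerivAt_mul_const y))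
      rw [hd.deriv]
      have hphi : phiF (t * y) ≤ phiF t :=
        phiF_antitoneOn ht hty (le_mul_of_one_le_right (by linarith) hy)
    -- phiF t = 2 * t * (d t) where d t = log((t+1)/(t-1))/2
      have e1 : phiF t = t * Real.log ((t + 1) / (t - 1)) := by
        rw [phiF, Real.log_div (by linarith) (by intro h; nlinarith)]
      have e2 : phiF (t * y) = (t * y) * Real.log ((t * y + 1) / (t * y - 1)) := by
        rw [phiF, Real.log_div (by nlinarith) (by intro h; nlinarith)]
      rw [e1, e2] at hphi
      rw [sub_nonneg]
      have ht0 : 0 < t := by linarith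
      rw [div_mul_eq_mul_div, div_le_div_iff₀ two_pos two_pos, ← mul_le_mul_iff_right₀ ht0]
      calc t * (Real.log ((t * y + 1) / (t * y - 1)) * y * 2)
          = (t * y * Real.log ((t * y + 1) / (t * y - 1))) * 2 := by ring
        _ ≤ (t * Real.log ((t + 1) / (t - 1))) * 2 := by linarith
        _ = t * (Real.log ((t + 1) / (t - 1)) * 2) := by ring
  have := hmono Set.self_mem_Ici hx hx
  rw [hF1] at this
  simp only [hF] at this
  linarith

lemma hEnt_prod_le {ι : Type*} (s : Finset ι) (f : ι → ℝ) (hf : ∀ i, 1 ≤ f i) :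
    hEnt (∏ i ∈ s, f i) ≤ ∑ i ∈ s, hEnt (f i) := by
  classical
  induction s using Finset.cons_induction with
  | empty => simp [hEnt_one]
  | cons a s ha ih =>
    rw [Finset.prod_cons, Finset.sum_cons]
    have h1 : (1:ℝ) ≤ ∏ i ∈ s, f i := by
      calc (1:ℝ) = ∏ _i ∈ s, (1:ℝ) := by simp
        _ ≤ ∏ i ∈ s, f i := Finset.prod_le_prod (by simp) (fun i _ => hf i)
    calc hEnt (f a * ∏ i ∈ s, f i) ≤ hEnt (f a) + hEnt (∏ i ∈ s, f i) :=
          hEnt_mul_le (hf a) h1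
      _ ≤ hEnt (f a) + ∑ i ∈ s, hEnt (f i) := by linarith



lemma det_symp : symp.det = 1 := by
  simp [symp, Matrix.det_fin_two_of]

lemma det_Jmat (α : Type*) [Fintype α] [DecidableEq α] : (Jmat α).det = 1 := by
  have h : Jmat α = (blockDiagonal fun _ : α => symp).submatrix
      (Equiv.prodComm α (Fin 2)) (Equiv.prodComm α (Fin 2)) := by
    ext ⟨a, i⟩ ⟨b, j⟩
    by_cases hab : a = b <;>
      simp [Jmat, submatrix_apply, Equiv.prodComm_apply, Prod.swap_prod_mk,
        blockDiagonal_apply, hab]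
  rw [h, det_submatrix_equiv_self, det_blockDiagonal]
  simp [det_symp]

lemma symplectic_det_sq {α : Type*} [Fintype α] [DecidableEq α]
    {S : Matrix (α × Fin 2) (α × Fin 2) ℝ} (hS : S * Jmat α * Sᵀ = Jmat α) :
    S.det * S.det = 1 := by
  have := congrArg Matrix.det hS
  rwa [det_mul, det_mul, det_transpose, det_Jmat, mul_one, mul_comm] at this

lemma det_conj_symplectic {α : Type*} [Fintype α] [DecidableEq α]
    {S : Matrix (α × Fin 2) (α × Fin 2) ℝ} (hS : S * Jmat α * Sᵀ = Jmat α)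
    (D : Matrix (α × Fin 2) (α × Fin 2) ℝ) : (S * D * Sᵀ).det = D.det := by
  rw [det_mul, det_mul, det_transpose]
  calc S.det * D.det * S.det = S.det * S.det * D.det := by ring
    _ = D.det := by rw [symplectic_det_sq hS, one_mul]

/-- A principal submatrix (along an injective map) of a positive definite real
matrix is positive definite. -/
lemma Matrix.PosDef.submatrix_inj {m n : Type*} [Fintype m] [Fintype n] [DecidableEq n]
    {M : Matrix n n ℝ} (hM : M.PosDef) {e : m → n} (he : Function.Injective e) :
    (M.submatrix e e).PosDef := by
  classical
  refine PosDef.of_dotProduct_mulVec_pos (hM.1.submatrix e) fun x hx => ?_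
  set y : n → ℝ := fun k => ∑ i, if e i = k then x i else 0 with hy
  have key : ∀ f : n → ℝ, (∑ k, y k * f k) = ∑ i, x i * f (e i) := by
    intro f
    simp only [hy, Finset.sum_mul, ite_mul, zero_mul]
    rw [Finset.sum_comm]
    refine Finset.sum_congr rfl fun i _ => ?_
    simp [Finset.sum_ite_eq]
  have hyne : y ≠ 0 := by
    obtain ⟨i, hi⟩ := Function.ne_iff.mp hx
    intro h
    apply hi
    have h1 : y (e i) = x i := by
      simp only [hy, he.eq_iff]
      rw [Finset.sum_ite_eq' Finset.univ i x]
      simp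
    rw [h] at h1
    simpa using h1.symm
  have heq : dotProduct (star x) ((M.submatrix e e) *ᵥ x)
      = dotProduct (star y) (M *ᵥ y) := by
    simp only [star_trivial, dotProduct, mulVec, submatrix_apply]
    rw [key fun k => ∑ l, M k l * y l]
    refine Finset.sum_congr rfl fun i _ => ?_
    congr 1
    have step : (∑ l, M (e i) l * y l) = ∑ j, M (e i) (e j) * x j := by
      have : ∀ l, M (e i) l * y l = y l * M (e i) l := fun l => mul_comm _ _
      calc (∑ l, M (e i) l * y l) = ∑ l, y l * M (e i) l := by simp [this]
        _ = ∑ j, x j * M (e i) (e j) := key fun l => M (e i) l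
        _ = ∑ j, M (e i) (e j) * x j := by
            refine Finset.sum_congr rfl fun j _ => mul_comm _ _
    exact step.symm
  rw [heq]
  exact hM.dotProduct_mulVec_pos hyne


lemma one_le_det_one_add_posSemidef {n : Type*} [Fintype n] [DecidableEq n]
    {T : Matrix n n ℝ} (hT : T.PosSemidef) : 1 ≤ (1 + T).det := by
  classical
  have hH : T.IsHermitian := hT.1
  set U : Matrix n n ℝ := (hH.eigenvectorUnitary : Matrix n n ℝ)
  have hU : U * star U = 1 := (Matrix.mem_unitaryGroup_iff).mp hH.eigenvectorUnitary.2
  have hU' : star U * U = 1 := (Matrix.mem_unitaryGroup_iff').mp hH.eigenvectorUnitary.2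
  have hspec := hH.spectral_theorem
  have h1 : (1 : Matrix n n ℝ) + T
      = U * (1 + diagonal (RCLike.ofReal ∘ hH.eigenvalues)) * star U := by
    rw [Matrix.mul_add, Matrix.add_mul, Matrix.mul_one, hU]
    conv_lhs => rw [hspec, Unitary.conjStarAlgAut_apply]
  rw [h1, det_mul, det_mul, mul_comm, ← mul_assoc, ← det_mul, ← det_mul, hU', Matrix.one_mul]
  have h2 : (1 : Matrix n n ℝ) + diagonal (RCLike.ofReal ∘ hH.eigenvalues)
      = diagonal (fun i => 1 + (RCLike.ofReal ∘ hH.eigenvalues) i) := by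
    rw [← diagonal_one, diagonal_add]
  rw [h2, det_diagonal]
  calc (1:ℝ) = ∏ _i : n, (1:ℝ) := by simp
    _ ≤ ∏ i, (1 + (RCLike.ofReal ∘ hH.eigenvalues) i) :=
      Finset.prod_le_prod (by simp) (fun i _ => by
        have := hT.eigenvalues_nonneg i
        simp only [Function.comp_apply, RCLike.ofReal_real_eq_id, id_eq]
        linarith)

open scoped MatrixOrder in
lemma posDef_of_posSemidef_det_ne_zero {n : Type*} [Fintype n] [DecidableEq n]
    {P : Matrix n n ℝ} (hP : P.PosSemidef) (hd : P.det ≠ 0) : P.PosDef := by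
  classical
  refine PosDef.of_dotProduct_mulVec_pos hP.1 fun x hx => ?_
  rcases lt_or_eq_of_le (hP.dotProduct_mulVec_nonneg x) with h | h
  · simpa using h
  · exfalso
    apply hx
    set Q := CFC.sqrt P
    have hQQ : Q * Q = P := CFC.sqrt_mul_sqrt_self P hP.nonneg
    have hQH : Q.IsHermitian := (CFC.sqrt_nonneg P).posSemidef.1
    have hdp : dotProduct (Q *ᵥ x) (Q *ᵥ x) = 0 := by
      have : dotProduct (star x) (P *ᵥ x) = dotProduct (Q *ᵥ x) (Q *ᵥ x) := by
        rw [← hQQ, ← mulVec_mulVec, star_trivial]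
        rw [dotProduct_mulVec x Q (Q *ᵥ x)]
        congr 1
        rw [← Matrix.mulVec_transpose]
        conv_rhs => rw [← hQH.eq]
        rfl
      rw [← this, ← h]
    have hQx : Q *ᵥ x = 0 := dotProduct_self_eq_zero.mp hdp
    have hPx : P *ᵥ x = 0 := by rw [← hQQ, ← mulVec_mulVec, hQx, mulVec_zero]
    have hinj : Function.Injective (P.mulVec) :=
      mulVec_injective_iff_isUnit.mpr ((isUnit_iff_isUnit_det P).mpr hd.isUnit)
    have := hinj (by rw [hPx, mulVec_zero] : P *ᵥ x = P *ᵥ 0)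
    exact this

open scoped MatrixOrder in
lemma det_le_det_add {n : Type*} [Fintype n] [DecidableEq n]
    {P S : Matrix n n ℝ} (hP : P.PosDef) (hS : S.PosSemidef) :
    P.det ≤ (P + S).det := by
  classical
  set Q := CFC.sqrt P with hQdef
  have hQQ : Q * Q = P := CFC.sqrt_mul_sqrt_self P hP.posSemidef.nonneg
  have hQH : Q.IsHermitian := (CFC.sqrt_nonneg P).posSemidef.1
  have hdetP : 0 < P.det := hP.det_pos
  have hdQ : Q.det * Q.det = P.det := by rw [← det_mul, hQQ]
  have hQdet : Q.det ≠ 0 := by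
    intro h; rw [h, mul_zero] at hdQ; rw [← hdQ] at hdetP; exact lt_irrefl _ hdetP
  have hQunit : IsUnit Q.det := hQdet.isUnit
  letI := Q.invertibleOfIsUnitDet hQunit
  have hQinvH : (Q⁻¹).IsHermitian := hQH.inv
  have hT : (Q⁻¹ * S * Q⁻¹).PosSemidef := by
    have := hS.mul_mul_conjTranspose_same (Q⁻¹)
    rwa [hQinvH.eq] at this
  have hsplit : P + S = Q * (1 + Q⁻¹ * S * Q⁻¹) * Q := by
    rw [Matrix.mul_add, Matrix.add_mul, Matrix.mul_one, hQQ]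
    congr 1
    calc S = (Q * Q⁻¹) * S * (Q⁻¹ * Q) := by
            rw [Matrix.mul_nonsing_inv _ hQunit, Matrix.nonsing_inv_mul _ hQunit,
              Matrix.one_mul, Matrix.mul_one]
      _ = Q * (Q⁻¹ * S * Q⁻¹) * Q := by
            simp only [Matrix.mul_assoc]
  calc P.det = P.det * 1 := (mul_one _).symm
    _ ≤ P.det * (1 + Q⁻¹ * S * Q⁻¹).det := by
        have := one_le_det_one_add_posSemidef hT
        exact mul_le_mul_of_nonneg_left this hdetP.le
    _ = (P + S).det := by
        rw [hsplit, det_mul, det_mul]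
        rw [← hdQ]; ring


lemma fischer {m n : Type*} [Fintype m] [Fintype n] [DecidableEq m] [DecidableEq n]
    (M : Matrix (m ⊕ n) (m ⊕ n) ℝ) (hM : M.PosDef) (hsym : M.IsSymm) :
    M.det ≤ (M.toBlocks₁₁).det * (M.toBlocks₂₂).det := by
  classical
  set A := M.toBlocks₁₁ with hAdef
  set B := M.toBlocks₁₂ with hBdef
  set C := M.toBlocks₂₁ with hCdef
  set D := M.toBlocks₂₂ with hDdef
  have hMb : M = fromBlocks A B C D := (fromBlocks_toBlocks M).symm
  have hApd : A.PosDef := hM.submatrix_inj Sum.inl_injective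
  have hDpd : D.PosDef := hM.submatrix_inj Sum.inr_injective
  haveI iA : Invertible A := A.invertibleOfIsUnitDet hApd.det_pos.ne'.isUnit
  have hCB : C = Bᵀ := by
    ext i j
    exact (congrFun (congrFun hsym (Sum.inr i)) (Sum.inl j)).symm
  have hCB' : C = Bᴴ := by rw [hCB, conjTranspose_eq_transpose_of_trivial]
  have hdet : M.det = A.det * (D - C * A⁻¹ * B).det := by
    rw [hMb, det_fromBlocks₁₁, invOf_eq_nonsing_inv]
  have hSps : (C * A⁻¹ * B).PosSemidef := by
    rw [hCB']
    exact (hApd.inv.posSemidef).conjTranspose_mul_mul_same B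
  have hSchurPs : (D - C * A⁻¹ * B).PosSemidef := by
    have hMps : (fromBlocks A B Bᴴ D).PosSemidef := by
      rw [← hCB', ← hMb]; exact hM.posSemidef
    have := (PosDef.fromBlocks₁₁ B D hApd).mp hMps
    rwa [← hCB'] at this
  have hSchurDetNe : (D - C * A⁻¹ * B).det ≠ 0 := by
    intro h0
    rw [h0, mul_zero] at hdet
    exact hM.det_pos.ne' hdet
  have hSchurPd : (D - C * A⁻¹ * B).PosDef :=
    posDef_of_posSemidef_det_ne_zero hSchurPs hSchurDetNe
  have hDD : (D - C * A⁻¹ * B) + (C * A⁻¹ * B) = D := sub_add_cancel _ _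
  have hle : (D - C * A⁻¹ * B).det ≤ D.det := by
    have := det_le_det_add hSchurPd hSps
    rwa [hDD] at this
  rw [hdet]
  exact mul_le_mul_of_nonneg_left hle hApd.det_pos.le

lemma purity {m n : Type*} [Fintype m] [Fintype n] [DecidableEq m] [DecidableEq n]
    (M : Matrix (m ⊕ n) (m ⊕ n) ℝ) (K₁ : Matrix m m ℝ) (K₂ : Matrix n n ℝ)
    (hM : M.PosDef) (hK₁ : IsUnit K₁.det) (hK₂ : IsUnit K₂.det)
    (h : M * fromBlocks K₁ 0 0 K₂ * M = fromBlocks K₁ 0 0 K₂) :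
    (M.toBlocks₁₁).det = (M.toBlocks₂₂).det := by
  classical
  set A := M.toBlocks₁₁ with hAdef
  set B := M.toBlocks₁₂ with hBdef
  set C := M.toBlocks₂₁ with hCdef
  set D := M.toBlocks₂₂ with hDdef
  have hMb : M = fromBlocks A B C D := (fromBlocks_toBlocks M).symm
  have hDpd : D.PosDef := hM.submatrix_inj Sum.inr_injective
  haveI iD : Invertible D := D.invertibleOfIsUnitDet hDpd.det_pos.ne'.isUnit
  haveI iM : Invertible M := M.invertibleOfIsUnitDet hM.det_pos.ne'.isUnit
  haveI iMb : Invertible (fromBlocks A B C D) := hMb ▸ iM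
  haveI iS : Invertible (A - B * ⅟D * C) := invertibleOfFromBlocks₂₂Invertible A B C D
  have hJu : IsUnit (fromBlocks K₁ 0 0 K₂ : Matrix (m ⊕ n) (m ⊕ n) ℝ).det := by
    rw [det_fromBlocks_zero₂₁]; exact hK₁.mul hK₂
  -- det M = 1
  have hdetM : M.det = 1 := by
    have hd := congrArg Matrix.det h
    rw [det_mul, det_mul] at hd
    have hzero : (M.det * M.det - 1) * (fromBlocks K₁ 0 0 K₂ : Matrix (m ⊕ n) (m ⊕ n) ℝ).det = 0 := by
      linear_combination hd
    rcases mul_eq_zero.mp hzero with h1 | h2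
    · have := sub_eq_zero.mp h1
      rcases mul_self_eq_one_iff.mp this with h' | h'
      · exact h'
      · exfalso; have := hM.det_pos; rw [h'] at this; linarith
    · exact absurd h2 hJu.ne_zero
  -- inverse formula
  have hMinv : M⁻¹ = fromBlocks K₁ 0 0 K₂ * M * (fromBlocks K₁ 0 0 K₂)⁻¹ := by
    apply Matrix.inv_eq_right_inv
    calc M * (fromBlocks K₁ 0 0 K₂ * M * (fromBlocks K₁ 0 0 K₂)⁻¹)
        = (M * fromBlocks K₁ 0 0 K₂ * M) * (fromBlocks K₁ 0 0 K₂)⁻¹ := by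
          simp only [Matrix.mul_assoc]
      _ = 1 := by rw [h, Matrix.mul_nonsing_inv _ hJu]
  have hJinv : (fromBlocks K₁ 0 0 K₂ : Matrix (m ⊕ n) (m ⊕ n) ℝ)⁻¹
      = fromBlocks K₁⁻¹ 0 0 K₂⁻¹ := by
    rw [inv_fromBlocks_zero₂₁_of_isUnit_iff _ _ _
      (iff_of_true ((isUnit_iff_isUnit_det _).mpr hK₁) ((isUnit_iff_isUnit_det _).mpr hK₂))]
    simp
  have h11 : (M⁻¹).toBlocks₁₁ = K₁ * A * K₁⁻¹ := by
    rw [hMinv, hJinv]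
    conv_lhs => rw [hMb]
    rw [fromBlocks_multiply, fromBlocks_multiply]
    simp [toBlocks_fromBlocks₁₁]
  have h11' : (M⁻¹).toBlocks₁₁ = (A - B * D⁻¹ * C)⁻¹ := by
    have hstep : M⁻¹ = (fromBlocks A B C D)⁻¹ := by rw [← hMb]
    rw [hstep, ← invOf_eq_nonsing_inv, invOf_fromBlocks₂₂_eq, toBlocks_fromBlocks₁₁]
    simp only [invOf_eq_nonsing_inv]
  have eS : A - B * ⅟D * C = A - B * D⁻¹ * C := by rw [invOf_eq_nonsing_inv]
  haveI iS' : Invertible (A - B * D⁻¹ * C) := eS ▸ iS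
  have hSu : IsUnit (A - B * D⁻¹ * C).det :=
    (isUnit_iff_isUnit_det _).mp (isUnit_of_invertible _)
  have hk : K₁.det ≠ 0 := hK₁.ne_zero
  have hdetA : A.det = ((A - B * D⁻¹ * C).det)⁻¹ := by
    have hdd := congrArg Matrix.det (h11.symm.trans h11')
    rw [det_mul, det_mul, det_nonsing_inv, det_nonsing_inv, Ring.inverse_eq_inv'] at hdd
    calc A.det = K₁.det * A.det * (K₁.det)⁻¹ := by field_simp
      _ = ((A - B * D⁻¹ * C).det)⁻¹ := hdd
  have hdetM2 : M.det = D.det * (A - B * D⁻¹ * C).det := by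
    rw [hMb, det_fromBlocks₂₂, invOf_eq_nonsing_inv]
  rw [hdetM] at hdetM2
  rw [hdetA]
  exact inv_eq_of_mul_eq_one_left hdetM2.symm

lemma Jmat_submatrix_sum (α β : Type*) [DecidableEq α] [DecidableEq β] :
    (Jmat (α ⊕ β)).submatrix (Equiv.sumProdDistrib α β (Fin 2)).symm
      (Equiv.sumProdDistrib α β (Fin 2)).symm
    = fromBlocks (Jmat α) 0 0 (Jmat β) := by
  ext p q
  rcases p with ⟨a, i⟩ | ⟨b, i⟩ <;> rcases q with ⟨a', j⟩ | ⟨b', j⟩ <;>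
    simp [Jmat, Equiv.sumProdDistrib, submatrix_apply, fromBlocks]

/-- **SSA hierarchy for pure Gaussian states (Theorem 2).** Let `V` be the
covariance matrix of a pure Gaussian state of `nA + nB + nC` modes (real
symmetric positive definite and symplectic, `V Jₙ Vᵀ = Jₙ`), partitioned into
groups `A`, `B`, `C`. Suppose the reduced covariance matrix `V_A` has mode-wise
symplectic spectrum `(1, …, 1, ν)` (witnessed by a symplectic `S_A` with
`V_A = S_A D_A S_Aᵀ`), and `V_B`, `V_C` have mode-wise symplectic spectra
`(β_j)`, `(γ_k)` (witnessed by symplectic `S_B`, `S_C` respectively). Then the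
von Neumann entropies satisfy `h(ν) ≤ ∑ j, h(β_j) + ∑ k, h(γ_k)`:
strong subadditivity for the log-determinant implies strong subadditivity of
the von Neumann entropy for such states. -/
theorem ssa_hierarchy_pure_gaussian (nA nB nC : ℕ)
    (hA : 0 < nA) (hB : 0 < nB) (hC : 0 < nC)
    (V : Matrix ((Fin nA ⊕ Fin nB ⊕ Fin nC) × Fin 2) ((Fin nA ⊕ Fin nB ⊕ Fin nC) × Fin 2) ℝ)
    (hsymm : V.IsSymm) (hpos : V.PosDef)
    (hsymp : V * Jmat (Fin nA ⊕ Fin nB ⊕ Fin nC) * Vᵀ = Jmat (Fin nA ⊕ Fin nB ⊕ Fin nC))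
    -- the reduced state of A has symplectic spectrum (1, …, 1, ν)
    (SA : Matrix (Fin nA × Fin 2) (Fin nA × Fin 2) ℝ)
    (hSA : SA * Jmat (Fin nA) * SAᵀ = Jmat (Fin nA))
    (ν : ℝ) (hν : 1 ≤ ν)
    (hVA : V.submatrix
        (fun p : Fin nA × Fin 2 => (Sum.inl p.1, p.2))
        (fun p : Fin nA × Fin 2 => (Sum.inl p.1, p.2))
      = SA * Matrix.diagonal (fun p : Fin nA × Fin 2 =>
          if (p.1 : ℕ) + 1 = nA then ν else 1) * SAᵀ)
    -- the reduced state of B has symplectic spectrum (β_1, …, β_{nB})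
    (SB : Matrix (Fin nB × Fin 2) (Fin nB × Fin 2) ℝ)
    (hSB : SB * Jmat (Fin nB) * SBᵀ = Jmat (Fin nB))
    (β : Fin nB → ℝ) (hβ : ∀ j, 1 ≤ β j)
    (hVB : V.submatrix
        (fun p : Fin nB × Fin 2 => (Sum.inr (Sum.inl p.1), p.2))
        (fun p : Fin nB × Fin 2 => (Sum.inr (Sum.inl p.1), p.2))
      = SB * Matrix.diagonal (fun p : Fin nB × Fin 2 => β p.1) * SBᵀ)
    -- the reduced state of C has symplectic spectrum (γ_1, …, γ_{nC})
    (SC : Matrix (Fin nC × Fin 2) (Fin nC × Fin 2) ℝ)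
    (hSC : SC * Jmat (Fin nC) * SCᵀ = Jmat (Fin nC))
    (γ : Fin nC → ℝ) (hγ : ∀ k, 1 ≤ γ k)
    (hVC : V.submatrix
        (fun p : Fin nC × Fin 2 => (Sum.inr (Sum.inr p.1), p.2))
        (fun p : Fin nC × Fin 2 => (Sum.inr (Sum.inr p.1), p.2))
      = SC * Matrix.diagonal (fun p : Fin nC × Fin 2 => γ p.1) * SCᵀ) :
    hEnt ν ≤ (∑ j, hEnt (β j)) + ∑ k, hEnt (γ k) := by
  classical

  -- abbreviations
  have hsymp' : V * Jmat (Fin nA ⊕ Fin nB ⊕ Fin nC) * V = Jmat (Fin nA ⊕ Fin nB ⊕ Fin nC) := by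
    rw [hsymm] at hsymp; exact hsymp
  set e1 := Equiv.sumProdDistrib (Fin nA) (Fin nB ⊕ Fin nC) (Fin 2) with he1
  set W := V.submatrix e1.symm e1.symm with hWdef
  have hWpd : W.PosDef := hpos.submatrix_inj e1.symm.injective
  have hWsymp : W * fromBlocks (Jmat (Fin nA)) 0 0 (Jmat (Fin nB ⊕ Fin nC)) * W
      = fromBlocks (Jmat (Fin nA)) 0 0 (Jmat (Fin nB ⊕ Fin nC)) := by
    calc W * fromBlocks (Jmat (Fin nA)) 0 0 (Jmat (Fin nB ⊕ Fin nC)) * W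
        = V.submatrix e1.symm e1.symm
            * (Jmat (Fin nA ⊕ Fin nB ⊕ Fin nC)).submatrix e1.symm e1.symm
            * V.submatrix e1.symm e1.symm := by rw [Jmat_submatrix_sum]
      _ = (V * Jmat (Fin nA ⊕ Fin nB ⊕ Fin nC) * V).submatrix e1.symm e1.symm := by
            rw [submatrix_mul_equiv, submatrix_mul_equiv]
      _ = (Jmat (Fin nA ⊕ Fin nB ⊕ Fin nC)).submatrix e1.symm e1.symm := by rw [hsymp']
      _ = fromBlocks (Jmat (Fin nA)) 0 0 (Jmat (Fin nB ⊕ Fin nC)) := Jmat_submatrix_sum _ _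
  have hpur := purity W (Jmat (Fin nA)) (Jmat (Fin nB ⊕ Fin nC)) hWpd
    (by rw [det_Jmat]; exact isUnit_one) (by rw [det_Jmat]; exact isUnit_one) hWsymp
  have hW11 : W.toBlocks₁₁ = V.submatrix
      (fun p : Fin nA × Fin 2 => (Sum.inl p.1, p.2))
      (fun p : Fin nA × Fin 2 => (Sum.inl p.1, p.2)) := by
    ext ⟨a, i⟩ ⟨b, j⟩
    simp [hWdef, he1, toBlocks₁₁, Equiv.sumProdDistrib_symm_apply_left, Equiv.sumProdDistrib_symm_apply_right, submatrix_apply]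
  set VBC := V.submatrix
      (fun p : (Fin nB ⊕ Fin nC) × Fin 2 => ((Sum.inr p.1 : Fin nA ⊕ Fin nB ⊕ Fin nC), p.2))
      (fun p : (Fin nB ⊕ Fin nC) × Fin 2 => ((Sum.inr p.1 : Fin nA ⊕ Fin nB ⊕ Fin nC), p.2))
    with hVBCdef
  have hW22 : W.toBlocks₂₂ = VBC := by
    ext ⟨a, i⟩ ⟨b, j⟩
    simp [hWdef, he1, hVBCdef, toBlocks₂₂, Equiv.sumProdDistrib_symm_apply_left, Equiv.sumProdDistrib_symm_apply_right, submatrix_apply]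
  rw [hW11, hW22, hVA] at hpur
  -- determinant of V_A
  have hdetVA : (SA * Matrix.diagonal (fun p : Fin nA × Fin 2 =>
      if (p.1 : ℕ) + 1 = nA then ν else 1) * SAᵀ).det = ν ^ 2 := by
    rw [det_conj_symplectic hSA, det_diagonal, Fintype.prod_prod_type]
    have hlast : ∀ a : Fin nA, ((a : ℕ) + 1 = nA) ↔ (a = ⟨nA - 1, by omega⟩) := by
      intro a
      rw [Fin.ext_iff]
      simp only []
      omega
    calc (∏ a : Fin nA, ∏ _i : Fin 2, (if ((a : ℕ) + 1 = nA) then ν else 1))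
        = ∏ a : Fin nA, (if a = (⟨nA - 1, by omega⟩ : Fin nA) then ν ^ 2 else 1) := by
          refine Finset.prod_congr rfl fun a _ => ?_
          rw [Finset.prod_const, Finset.card_univ, Fintype.card_fin]
          by_cases hc : (a : ℕ) + 1 = nA
          · rw [if_pos hc, if_pos ((hlast a).mp hc)]
          · rw [if_neg hc, if_neg (fun hh => hc ((hlast a).mpr hh)), one_pow]
      _ = ν ^ 2 := by
          rw [Finset.prod_ite_eq' Finset.univ (⟨nA - 1, by omega⟩ : Fin nA)
            (fun _ => ν ^ 2)]
          simp
  rw [hdetVA] at hpur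
  -- second split
  set e2 := Equiv.sumProdDistrib (Fin nB) (Fin nC) (Fin 2) with he2
  set W2 := VBC.submatrix e2.symm e2.symm with hW2def
  have hinjR : Function.Injective
      (fun p : (Fin nB ⊕ Fin nC) × Fin 2 =>
        ((Sum.inr p.1 : Fin nA ⊕ Fin nB ⊕ Fin nC), p.2)) := by
    intro p q hpq
    cases p; cases q
    simp only [Prod.mk.injEq, Sum.inr.injEq] at hpq
    simp [Prod.ext_iff, hpq.1, hpq.2]
  have hW2pd : W2.PosDef := by
    rw [hW2def, hVBCdef, submatrix_submatrix]
    exact hpos.submatrix_inj (hinjR.comp e2.symm.injective)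
  have hVBCsym : VBCᵀ = VBC := by rw [hVBCdef, transpose_submatrix, hsymm]
  have hW2sym : W2.IsSymm := by
    rw [Matrix.IsSymm, hW2def, transpose_submatrix, hVBCsym]
  have hfis := fischer W2 hW2pd hW2sym
  have hdetW2 : W2.det = VBC.det := det_submatrix_equiv_self e2.symm VBC
  have hW2_11 : W2.toBlocks₁₁ = V.submatrix
      (fun p : Fin nB × Fin 2 => (Sum.inr (Sum.inl p.1), p.2))
      (fun p : Fin nB × Fin 2 => (Sum.inr (Sum.inl p.1), p.2)) := by
    ext ⟨a, i⟩ ⟨b, j⟩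
    simp [hW2def, he2, hVBCdef, toBlocks₁₁, Equiv.sumProdDistrib_symm_apply_left, Equiv.sumProdDistrib_symm_apply_right, submatrix_apply]
  have hW2_22 : W2.toBlocks₂₂ = V.submatrix
      (fun p : Fin nC × Fin 2 => (Sum.inr (Sum.inr p.1), p.2))
      (fun p : Fin nC × Fin 2 => (Sum.inr (Sum.inr p.1), p.2)) := by
    ext ⟨a, i⟩ ⟨b, j⟩
    simp [hW2def, he2, hVBCdef, toBlocks₂₂, Equiv.sumProdDistrib_symm_apply_left, Equiv.sumProdDistrib_symm_apply_right, submatrix_apply]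
  rw [hdetW2, hW2_11, hW2_22, hVB, hVC] at hfis
  -- determinants of V_B and V_C
  have hdetVB : (SB * Matrix.diagonal (fun p : Fin nB × Fin 2 => β p.1) * SBᵀ).det
      = (∏ j, β j) ^ 2 := by
    rw [det_conj_symplectic hSB, det_diagonal, Fintype.prod_prod_type]
    simp only [Finset.prod_const, Finset.card_univ, Fintype.card_fin]
    rw [← Finset.prod_pow]
  have hdetVC : (SC * Matrix.diagonal (fun p : Fin nC × Fin 2 => γ p.1) * SCᵀ).det
      = (∏ k, γ k) ^ 2 := by
    rw [det_conj_symplectic hSC, det_diagonal, Fintype.prod_prod_type]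
    simp only [Finset.prod_const, Finset.card_univ, Fintype.card_fin]
    rw [← Finset.prod_pow]
  rw [hdetVB, hdetVC] at hfis
  -- numeric chain
  have hPb : (1:ℝ) ≤ ∏ j, β j := by
    calc (1:ℝ) = ∏ _j : Fin nB, (1:ℝ) := by simp
      _ ≤ ∏ j, β j := Finset.prod_le_prod (by simp) (fun j _ => hβ j)
  have hPc : (1:ℝ) ≤ ∏ k, γ k := by
    calc (1:ℝ) = ∏ _k : Fin nC, (1:ℝ) := by simp
      _ ≤ ∏ k, γ k := Finset.prod_le_prod (by simp) (fun k _ => hγ k)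
  have hsq : ν ^ 2 ≤ ((∏ j, β j) * (∏ k, γ k)) ^ 2 := by
    rw [mul_pow]
    calc ν ^ 2 = VBC.det := hpur
      _ ≤ (∏ j, β j) ^ 2 * (∏ k, γ k) ^ 2 := hfis
  have hle : ν ≤ (∏ j, β j) * (∏ k, γ k) :=
    le_of_pow_le_pow_left₀ two_ne_zero (by positivity) hsq
  have hPbc : (1:ℝ) ≤ (∏ j, β j) * (∏ k, γ k) :=
    le_trans hPb (le_mul_of_one_le_right (by linarith) hPc)
  calc hEnt ν ≤ hEnt ((∏ j, β j) * (∏ k, γ k)) :=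
        hEnt_monotoneOn (Set.mem_Ici.mpr hν) (Set.mem_Ici.mpr hPbc) hle
    _ ≤ hEnt (∏ j, β j) + hEnt (∏ k, γ k) := hEnt_mul_le hPb hPc
    _ ≤ (∑ j, hEnt (β j)) + ∑ k, hEnt (γ k) :=
        add_le_add (hEnt_prod_le _ _ hβ) (hEnt_prod_le _ _ hγ)


end
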